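/- Let V ~ PG(b, c) be a Pólya–Gamma random variable with b > 0 and c real. Then E(V) = (b/(2c)) tanh(c/2) for c ≠ 0. -/

import Mathlib

open MeasureTheory Filter Topology

private lemma pg_key {t T : ℝ} (x : ℝ) (ht : 0 < t) (htT : t ≤ T) :
    (1 - Real.exp (-T * x)) / T ≤ (1 - Real.exp (-t * x)) / t := by
  have hT : 0 < T := ht.trans_le htT
  rw [div_le_div_iff₀ hT ht]
  have hl0 : 0 ≤ t / T := by positivity
  have hl1 : t / T ≤ 1 := (div_le_one hT).2 htT
  have hconv := convexOn_exp.2 (Set.mem_univ (0:ℝ)) (Set.mem_univ (-T*x))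
      (by linarith : (0:ℝ) ≤ 1 - t/T) hl0 (by ring)
  simp only [smul_eq_mul, mul_zero, zero_add, Real.exp_zero, mul_one] at hconv
  have hrw : (t/T) * (-T*x) = -t*x := by field_simp
  rw [hrw] at hconv
  have h1 : Real.exp (-t*x) * T ≤ ((1 - t/T) + t/T * Real.exp (-T*x)) * T :=
    mul_le_mul_of_nonneg_right hconv hT.le
  have h2 : ((1 - t/T) + t/T * Real.exp (-T*x)) * T = T - t + t * Real.exp (-T*x) := by
    field_simp
  nlinarith

private lemma pg_upper {t : ℝ} (x : ℝ) (ht : 0 < t) :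
    (1 - Real.exp (-t * x)) / t ≤ x := by
  rw [div_le_iff₀ ht]
  have := Real.add_one_le_exp (-t * x)
  nlinarith

/-- Mean of a Pólya–Gamma PG(b,c) random variable, characterized by its Laplace
transform `E[e^{-tV}] = (cosh(c/2)/cosh(√(c²+2t)/2))^b`. -/
theorem polyaGamma_mean {Ω : Type*} [MeasurableSpace Ω] (μ : Measure Ω)
    [IsProbabilityMeasure μ] (V : Ω → ℝ) (b c : ℝ) (hb : 0 < b) (hc : c ≠ 0)
    (hLaplace : ∀ t : ℝ, 0 ≤ t →
      ∫ ω, Real.exp (-t * V ω) ∂μ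
        = (Real.cosh (c / 2) / Real.cosh (Real.sqrt (c ^ 2 + 2 * t) / 2)) ^ b)
    (hInt : Integrable V μ) :
    ∫ ω, V ω ∂μ = b / (2 * c) * Real.tanh (c / 2) := by
  set G : ℝ → ℝ := fun t => (Real.cosh (c / 2) / Real.cosh (Real.sqrt (c ^ 2 + 2 * t) / 2)) ^ b
    with hGdef
  -- integrability of the exponentials
  have hIntExp : ∀ t : ℝ, 0 ≤ t → Integrable (fun ω => Real.exp (-t * V ω)) μ := by
    intro t ht
    by_contra h
    have h0 := hLaplace t ht
    rw [integral_undef h] at h0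
    have hpos : (0:ℝ) < (Real.cosh (c / 2) / Real.cosh (Real.sqrt (c ^ 2 + 2 * t) / 2)) ^ b := by
      have h1 := Real.cosh_pos (x := c/2)
      have h2 := Real.cosh_pos (x := Real.sqrt (c ^ 2 + 2 * t) / 2)
      positivity
    rw [← h0] at hpos
    exact lt_irrefl _ hpos
  set F : ℝ → Ω → ℝ := fun t ω => (1 - Real.exp (-t * V ω)) / t with hFdef
  -- dominated convergence
  have hB : Tendsto (fun t => ∫ ω, F t ω ∂μ) (𝓝[>] (0:ℝ)) (𝓝 (∫ ω, V ω ∂μ)) := by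
    apply tendsto_integral_filter_of_dominated_convergence
      (bound := fun ω => |V ω| + |1 - Real.exp (-1 * V ω)|)
    · filter_upwards [self_mem_nhdsWithin] with t ht
      have htpos : (0:ℝ) < t := ht
      exact (((integrable_const 1).sub (hIntExp t htpos.le)).div_const t).aestronglyMeasurable
    · filter_upwards [Ioc_mem_nhdsGT_of_mem (Set.mem_Ico.2 ⟨le_refl (0:ℝ), zero_lt_one⟩)] with t ht
      filter_upwards with ω
      have h1 := pg_key (V ω) ht.1 ht.2
      have h2 := pg_upper (V ω) ht.1
      rw [Real.norm_eq_abs, abs_le]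
      constructor
      · have : -(|1 - Real.exp (-1 * V ω)|) ≤ (1 - Real.exp (-1 * V ω)) / 1 := by
          rw [div_one]; exact neg_abs_le _
        have := this.trans h1
        have h3 : (0:ℝ) ≤ |V ω| := abs_nonneg _
        simp only [hFdef]
        linarith
      · have h4 : (0:ℝ) ≤ |1 - Real.exp (-1 * V ω)| := abs_nonneg _
        have h5 : V ω ≤ |V ω| := le_abs_self _
        simp only [hFdef]
        linarith
    · exact hInt.abs.add ((integrable_const 1).sub (hIntExp 1 zero_le_one)).abs
    · filter_upwards with ω
      have hf : HasDerivAt (fun t : ℝ => 1 - Real.exp (-t * V ω)) (V ω) 0 := by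
        have h1 : HasDerivAt (fun t : ℝ => -t * V ω) (-1 * V ω) 0 :=
          (hasDerivAt_id (0:ℝ)).neg.mul_const (V ω)
        have h2 := h1.exp
        have h3 := h2.const_sub 1
        refine h3.congr_deriv ?_
        simp
      have h4 := hasDerivAt_iff_tendsto_slope.mp hf
      have h5 : Tendsto (slope (fun t : ℝ => 1 - Real.exp (-t * V ω)) 0) (𝓝[>] (0:ℝ))
          (𝓝 (V ω)) := h4.mono_left (nhdsWithin_mono _ (fun x hx => ne_of_gt hx))
      refine h5.congr (fun t => ?_)
      rw [slope_def_field]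
      simp [hFdef]
  -- identify the integrals with (1 - G t)/t
  have hEq : ∀ᶠ t in 𝓝[>] (0:ℝ), ∫ ω, F t ω ∂μ = (1 - G t) / t := by
    filter_upwards [self_mem_nhdsWithin] with t ht
    have htpos : (0:ℝ) < t := ht
    have : ∫ ω, F t ω ∂μ = (∫ ω, (1 - Real.exp (-t * V ω)) ∂μ) / t := by
      simp only [hFdef]
      rw [integral_div]
    rw [this, integral_sub (integrable_const 1) (hIntExp t htpos.le), integral_const,
      probReal_univ, hLaplace t htpos.le]
    simp [hGdef]
  -- derivative of G at 0
  have hc2 : c ^ 2 + 2 * 0 ≠ 0 := by simpa using pow_ne_zero 2 hc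
  have hsq0 : Real.sqrt (c ^ 2 + 2 * 0) = |c| := by
    rw [mul_zero, add_zero, Real.sqrt_sq_eq_abs]
  have hcosh0 : Real.cosh (Real.sqrt (c ^ 2 + 2 * 0) / 2) = Real.cosh (c / 2) := by
    rw [hsq0]
    rcases abs_choice c with h | h <;> rw [h]
    rw [neg_div, Real.cosh_neg]
  have hcoshpos : (0:ℝ) < Real.cosh (c / 2) := Real.cosh_pos _
  have hG0 : G 0 = 1 := by
    simp only [hGdef]
    rw [hcosh0, div_self (ne_of_gt hcoshpos), Real.one_rpow]
  have hG : HasDerivAt G (-(b / (2 * c) * Real.tanh (c / 2))) 0 := by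
    have h1 : HasDerivAt (fun t : ℝ => c ^ 2 + 2 * t) 2 0 := by
      simpa using ((hasDerivAt_id (0:ℝ)).const_mul 2).const_add (c ^ 2)
    have h2 : HasDerivAt (fun t : ℝ => Real.sqrt (c ^ 2 + 2 * t))
        (1 / (2 * Real.sqrt (c ^ 2 + 2 * 0)) * 2) 0 := by
      have := (Real.hasDerivAt_sqrt hc2).comp 0 h1
      simpa [Function.comp_def] using this
    have h3 := (h2.div_const 2).cosh
    have h4 := (hasDerivAt_const (0:ℝ) (Real.cosh (c/2))).div h3 (by
      rw [hcosh0]; exact ne_of_gt hcoshpos)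
    have h5 := h4.rpow_const (p := b) (Or.inl (by
      simp only [Pi.div_apply]
      rw [hcosh0, div_self (ne_of_gt hcoshpos)]; exact one_ne_zero))
    convert h5 using 1
    · rfl
    simp only [Pi.div_apply]
    rw [hcosh0, div_self (ne_of_gt hcoshpos), Real.one_rpow, hsq0,
        Real.tanh_eq_sinh_div_cosh]
    rcases lt_or_gt_of_ne hc with h | h
    · rw [abs_of_neg h, neg_div, Real.sinh_neg]
      field_simp
      ring
    · rw [abs_of_pos h]
      field_simp
      ring
  -- limit of (1 - G t)/t
  have hslope : Tendsto (fun t => (1 - G t) / t) (𝓝[>] (0:ℝ))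
      (𝓝 (b / (2 * c) * Real.tanh (c / 2))) := by
    have h1 := hasDerivAt_iff_tendsto_slope.mp hG
    have h2 := (h1.mono_left (nhdsWithin_mono _ (fun x hx => ne_of_gt hx))).neg
    rw [neg_neg] at h2
    refine h2.congr (fun t => ?_)
    rw [slope_def_field, hG0]
    rw [sub_zero, ← neg_div, neg_sub]
  exact tendsto_nhds_unique (hB.congr' hEq) hslope
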